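/- If [S,T] is a new interval of Tam_n with n ≥ 1, then there exist binary trees S1 and T1 in Tam_{n−1} such that S = Y∘_1 S1 and T = Y∘_2 T1, where Y is the unique binary tree of size 1. -/

import Mathlib

/-- Planar binary trees. -/
inductive BT : Type
  | leaf : BT
  | node : BT → BT → BT
deriving DecidableEq

namespace BT

/-- Number of internal vertices. -/
def size : BT → ℕ
  | leaf => 0
  | node l r => l.size + r.size + 1

/-- One left rotation somewhere in the tree (covering relation of the Tamari lattice). -/
inductive Rot : BT → BT → Prop
  | root (a b c : BT) : Rot (node (node a b) c) (node a (node b c))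
  | left {l l' : BT} (r : BT) : Rot l l' → Rot (node l r) (node l' r)
  | right (l : BT) {r r' : BT} : Rot r r' → Rot (node l r) (node l r')

/-- The Tamari order: reflexive transitive closure of left rotations. -/
def tamariLE (S T : BT) : Prop := Relation.ReflTransGen Rot S T

/-- The partial order induced by a binary tree on `{1,…,size}` via in-order labelling:
`rel T i j` iff the vertex labelled `i` lies in the subtree rooted at the vertex labelled `j`. -/
def rel : BT → ℕ → ℕ → Prop
  | leaf, _, _ => False
  | node l r, i, j =>
      (j = l.size + 1 ∧ 1 ≤ i ∧ i ≤ l.size + r.size + 1) ∨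
      rel l i j ∨
      (∃ i' j', rel r i' j' ∧ i = i' + l.size + 1 ∧ j = j' + l.size + 1)

/-- Decreasing relations of a tree: pairs `(c, a)` with `a < c` and `c ◁ a`. -/
def Dec (T : BT) : Set (ℕ × ℕ) := {p | p.2 < p.1 ∧ T.rel p.1 p.2}

/-- Increasing relations of a tree: pairs `(a, c)` with `a < c` and `a ◁ c`. -/
def Inc (T : BT) : Set (ℕ × ℕ) := {p | p.1 < p.2 ∧ T.rel p.1 p.2}

/-- Left/right mirror image of a planar binary tree. -/
def mirror : BT → BT
  | leaf => leaf
  | node l r => node r.mirror l.mirror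

/-- In-order label of the root (0 for the empty tree). -/
def rootLabel : BT → ℕ
  | leaf => 0
  | node l _ => l.size + 1

/-- `rcRel T i j` iff, under in-order labelling, the vertex `j` is the right child of vertex `i`. -/
def rcRel : BT → ℕ → ℕ → Prop
  | leaf, _, _ => False
  | node l r, i, j =>
      (i = l.size + 1 ∧ r ≠ leaf ∧ j = l.size + 1 + r.rootLabel) ∨
      rcRel l i j ∨
      (∃ i' j', rcRel r i' j' ∧ i = i' + l.size + 1 ∧ j = j' + l.size + 1)

/-- `graft T i S` grafts the root of `S` on the `i`-th leaf of `T` (leaves numbered 1,…,size+1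
from left to right). -/
def graft : BT → ℕ → BT → BT
  | leaf, _, S => S
  | node l r, i, S =>
      if i ≤ l.size + 1 then node (l.graft i S) r
      else node l (r.graft (i - (l.size + 1)) S)

end BT

/-- An interval-poset of size `n`: a partial order on `{1,…,n}` (encoded as a relation on `ℕ`
supported and reflexive on `{1,…,n}`) satisfying the two interval-poset conditions. -/
def IsIntervalPoset (n : ℕ) (r : ℕ → ℕ → Prop) : Prop :=
  (∀ a b, r a b → 1 ≤ a ∧ a ≤ n ∧ 1 ≤ b ∧ b ≤ n) ∧
  (∀ a, 1 ≤ a → a ≤ n → r a a) ∧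
  (∀ a b c, r a b → r b c → r a c) ∧
  (∀ a b, r a b → r b a → a = b) ∧
  (∀ a b c, a < b → b < c → r a c → r b c) ∧
  (∀ a b c, a < b → b < c → r c a → r c b)

/-- The Châtel–Pons interval-poset of an interval `[S,T]`: reflexivity together with the
decreasing relations of `S` and the increasing relations of `T`. -/
def ipOf (S T : BT) : ℕ → ℕ → Prop := fun a b =>
  (a = b ∧ 1 ≤ a ∧ a ≤ S.size) ∨ (b < a ∧ S.rel a b) ∨ (a < b ∧ T.rel a b)

/-- `HasseCov r a b`: the relation `a ◁ b` is a cover relation (an edge `a → b` of the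
Hasse diagram) of the poset `r`. -/
def HasseCov (r : ℕ → ℕ → Prop) (a b : ℕ) : Prop :=
  r a b ∧ a ≠ b ∧ ∀ c, r a c → r c b → c = a ∨ c = b

/-- An exceptional interval-poset: the Hasse diagram contains no configuration
`y → x`, `y → z` with `x < y < z`. -/
def IsExceptional (n : ℕ) (r : ℕ → ℕ → Prop) : Prop :=
  IsIntervalPoset n r ∧
  ¬∃ x y z, x < y ∧ y < z ∧ HasseCov r y x ∧ HasseCov r y z

/-- A noncrossing tree in the based regular `(n+1)`-gon, with vertices `0,…,n`:
a spanning tree whose edges pairwise do not cross. Boundary edge `i` (for `1 ≤ i ≤ n`)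
joins vertices `i-1` and `i`; the base joins vertices `0` and `n`. -/
def IsNCTree (n : ℕ) (G : SimpleGraph (Fin (n + 1))) : Prop :=
  G.IsTree ∧
  ∀ a b c d : Fin (n + 1), G.Adj a b → G.Adj c d →
    ¬((a : ℕ) < c ∧ (c : ℕ) < b ∧ (b : ℕ) < d)

/-- Adjacency in a graph on `Fin (n+1)`, read on natural numbers. -/
def adjN (n : ℕ) (G : SimpleGraph (Fin (n + 1))) (a b : ℕ) : Prop :=
  ∃ (ha : a < n + 1) (hb : b < n + 1), G.Adj ⟨a, ha⟩ ⟨b, hb⟩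

/-- `EdgeLabel n G a b i`: the edge of the noncrossing tree `G` joining vertices `a < b`
carries the label `i`, i.e. it separates boundary edge `i` from the base and `i` is either
the edge itself (boundary case) or an open boundary edge. -/
def EdgeLabel (n : ℕ) (G : SimpleGraph (Fin (n + 1))) (a b i : ℕ) : Prop :=
  a < b ∧ b ≤ n ∧ adjN n G a b ∧ a < i ∧ i ≤ b ∧ (b = a + 1 ∨ ¬adjN n G (i - 1) i)

/-- The relation `◁_T` induced by a noncrossing tree: `i ◁ j` iff the edge labelled `i`
is separated from the base by the edge labelled `j` (plus reflexivity on `{1,…,n}`). -/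
def ncRel (n : ℕ) (G : SimpleGraph (Fin (n + 1))) : ℕ → ℕ → Prop := fun i j =>
  (i = j ∧ 1 ≤ i ∧ i ≤ n) ∨
  ∃ a b c d, EdgeLabel n G a b i ∧ EdgeLabel n G c d j ∧ c ≤ a ∧ b ≤ d ∧ ¬(a = c ∧ b = d)

/-- The graph `T_P` associated to an interval-poset `P`: for each `v`, an edge from the left
side of `min {x | x ◁ v}` (vertex `min − 1`) to the right side of `max {x | x ◁ v}`. -/
noncomputable def graphOf (n : ℕ) (r : ℕ → ℕ → Prop) : SimpleGraph (Fin (n + 1)) :=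
  SimpleGraph.fromRel (fun a b =>
    ∃ v, 1 ≤ v ∧ v ≤ n ∧ (a : ℕ) + 1 = sInf {x | r x v} ∧ (b : ℕ) = sSup {x | r x v})

/-- The partition `π_T` of a binary tree, as an equivalence-type relation: the finest
partition in which every vertex and its right child lie in the same block. -/
def sameBlock (T : BT) : ℕ → ℕ → Prop :=
  Relation.EqvGen (fun a b => T.rcRel a b ∨ T.rcRel b a)

/-- A relation (thought of as "same block of a partition") is noncrossing. -/
def IsNoncrossingRel (r : ℕ → ℕ → Prop) : Prop :=
  ¬∃ i j k l, i < j ∧ j < k ∧ k < l ∧ r i k ∧ r j l ∧ ¬r i j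

/-- The partition `π_T` of `{1,…,n}` associated to a binary tree, restricted to its support. -/
def partOf (T : BT) : ℕ → ℕ → Prop := fun a b =>
  sameBlock T a b ∧ 1 ≤ a ∧ a ≤ T.size ∧ 1 ≤ b ∧ b ≤ T.size

/-- A noncrossing partition of `{1,…,n}`, encoded as its "same block" equivalence relation. -/
def NCPartition (n : ℕ) (r : ℕ → ℕ → Prop) : Prop :=
  (∀ a b, r a b → 1 ≤ a ∧ a ≤ n ∧ 1 ≤ b ∧ b ≤ n) ∧
  (∀ a, 1 ≤ a → a ≤ n → r a a) ∧
  (∀ a b, r a b → r b a) ∧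
  (∀ a b c, r a b → r b c → r a c) ∧
  IsNoncrossingRel r

/-- `SubtreeAt S i j A`: `A` is a (nonempty) subtree of `S` rooted at an internal vertex,
whose leaves are the leaves `i,…,j` of `S`. -/
def SubtreeAt : BT → ℕ → ℕ → BT → Prop
  | .leaf, _, _, _ => False
  | .node l r, i, j, A =>
      (A = .node l r ∧ i = 1 ∧ j = (BT.node l r).size + 1) ∨
      SubtreeAt l i j A ∨
      (∃ i' j', SubtreeAt r i' j' A ∧ i = i' + l.size + 1 ∧ j = j' + l.size + 1)

/-- A new interval of `Tam n`: an interval that cannot be obtained as the grafting of two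
intervals of smaller sizes. -/
def IsNewInterval (n : ℕ) (S T : BT) : Prop :=
  S.size = n ∧ T.size = n ∧ BT.tamariLE S T ∧
  ¬∃ (S1 T1 S2 T2 : BT) (i : ℕ),
      S1.size = T1.size ∧ S2.size = T2.size ∧ S1.size < n ∧ S2.size < n ∧
      BT.tamariLE S1 T1 ∧ BT.tamariLE S2 T2 ∧ 1 ≤ i ∧ i ≤ S1.size + 1 ∧
      S = S1.graft i S2 ∧ T = T1.graft i T2

/-- The rise of a relation of size `n`: keep the decreasing relations, shift the increasing
relations by `+1`, on the ground set `{1,…,n+1}`. -/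
def riseRel (n : ℕ) (r : ℕ → ℕ → Prop) : ℕ → ℕ → Prop := fun a b =>
  (a = b ∧ 1 ≤ a ∧ a ≤ n + 1) ∨ (b < a ∧ r a b) ∨ (a < b ∧ 2 ≤ a ∧ r (a - 1) (b - 1))

/-- A relation is modern: no configuration `x ◁ y` and `z ◁ y` with `x < y < z`. -/
def ModernRel (r : ℕ → ℕ → Prop) : Prop :=
  ¬∃ x y z, x < y ∧ y < z ∧ r x y ∧ r z y

/-- A new interval-poset of size `m`: no increasing relation starting at `1`, no decreasing
relation starting at `m`, and no pair of relations `i+1 ◁ j+1` and `j ◁ i` with `i < j`. -/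
def NewIP (m : ℕ) (r : ℕ → ℕ → Prop) : Prop :=
  IsIntervalPoset m r ∧
  (¬∃ y, 1 < y ∧ r 1 y) ∧
  (¬∃ x, x < m ∧ r m x) ∧
  ¬∃ i j, i < j ∧ r (i + 1) (j + 1) ∧ r j i

/-- The fall of a relation of size `m`: keep the decreasing relations, shift the increasing
relations by `−1`, on the ground set `{1,…,m−1}`. -/
def fallRel (m : ℕ) (r : ℕ → ℕ → Prop) : ℕ → ℕ → Prop := fun a b =>
  (a = b ∧ 1 ≤ a ∧ a ≤ m - 1) ∨ (b < a ∧ r a b) ∨ (a < b ∧ r (a + 1) (b + 1))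

/-- Iterated rise: `riseIter n r k` is the `k`-th rise of a relation of size `n`. -/
def riseIter (n : ℕ) (r : ℕ → ℕ → Prop) : ℕ → (ℕ → ℕ → Prop)
  | 0 => r
  | k + 1 => riseRel (n + k) (riseIter n r k)

/-- An infinitely modern relation: no configuration `w ◁ x` and `z ◁ y` with `w < x < y < z`. -/
def InfModernRel (r : ℕ → ℕ → Prop) : Prop :=
  ¬∃ w x y z, w < x ∧ x < y ∧ y < z ∧ r w x ∧ r z y

open Classical in
/-- `irStat n r`: the smallest `k` with an increasing relation `k ◁ k+1`, and `n` if none. -/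
noncomputable def irStat (n : ℕ) (r : ℕ → ℕ → Prop) : ℕ :=
  if ∃ k, r k (k + 1) then sInf {k | r k (k + 1)} else n

open Classical in
/-- `drStat n r`: the largest `i` with a decreasing relation `i ◁ i−1`, and `1` if none. -/
noncomputable def drStat (n : ℕ) (r : ℕ → ℕ → Prop) : ℕ :=
  if ∃ i, 2 ≤ i ∧ r i (i - 1) then sSup {i | 2 ≤ i ∧ r i (i - 1)} else 1
namespace BT

/-- Graft at the leftmost leaf. -/
def lgraft : BT → BT → BT
  | leaf, S => S
  | node l r, S => node (lgraft l S) r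

/-- Graft at the rightmost leaf. -/
def rgraft : BT → BT → BT
  | leaf, S => S
  | node l r, S => node l (rgraft r S)

lemma lgraft_eq (T S : BT) : T.graft 1 S = lgraft T S := by
  induction T with
  | leaf => rfl
  | node l r ihl ihr =>
      simp only [graft, lgraft, if_pos (by omega : 1 ≤ l.size + 1), ihl]

lemma rgraft_eq (T S : BT) : T.graft (T.size + 1) S = rgraft T S := by
  induction T with
  | leaf => rfl
  | node l r ihl ihr =>
      have h1 : ¬ (node l r).size + 1 ≤ l.size + 1 := by simp [size]
      have h2 : (node l r).size + 1 - (l.size + 1) = r.size + 1 := by simp [size]; omega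
      simp only [graft, if_neg h1, h2, ihr, rgraft]

lemma rot_size {P Q : BT} (h : Rot P Q) : P.size = Q.size := by
  induction h with
  | root a b c => simp [size]; omega
  | left r _ ih => simp [size, ih]
  | right l _ ih => simp [size, ih]

lemma tamariLE_size {P Q : BT} (h : tamariLE P Q) : P.size = Q.size := by
  induction h with
  | refl => rfl
  | tail _ step ih => exact ih.trans (rot_size step)

lemma eq_leaf_of_size_eq_zero {T : BT} (h : T.size = 0) : T = leaf := by
  cases T with
  | leaf => rfl
  | node l r => simp [size] at h

/-- One backward step for decompositions at the leftmost leaf. -/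
lemma lstep : ∀ {P Q : BT}, Rot P Q → ∀ V W : BT, Q = lgraft V W →
    ∃ V' W' : BT, P = lgraft V' W' ∧
      ((Rot V' V ∧ W' = W) ∨ (V' = V ∧ Rot W' W)) := by
  intro P Q hrot
  induction hrot with
  | root a b c =>
      intro V W hQ
      cases V with
      | leaf =>
          have hQ' : node a (node b c) = W := hQ
          exact ⟨leaf, node (node a b) c, rfl, Or.inr ⟨rfl, hQ' ▸ Rot.root a b c⟩⟩
      | node Vl Vr =>
          simp only [lgraft, node.injEq] at hQ
          obtain ⟨ha, hVr⟩ := hQ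
          subst hVr
          exact ⟨node (node Vl b) c, W, by simp [lgraft, ha],
            Or.inl ⟨Rot.root Vl b c, rfl⟩⟩
  | @left l l' r hl ih =>
      intro V W hQ
      cases V with
      | leaf =>
          have hQ' : node l' r = W := hQ
          exact ⟨leaf, node l r, rfl, Or.inr ⟨rfl, hQ' ▸ Rot.left r hl⟩⟩
      | node Vl Vr =>
          simp only [lgraft, node.injEq] at hQ
          obtain ⟨hl', hVr⟩ := hQ
          subst hVr
          obtain ⟨V'', W'', hldec, hd⟩ := ih Vl W hl'
          refine ⟨node V'' r, W'', by simp [lgraft, hldec], ?_⟩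
          rcases hd with ⟨h1, h2⟩ | ⟨h1, h2⟩
          · exact Or.inl ⟨Rot.left r h1, h2⟩
          · exact Or.inr ⟨by rw [h1], h2⟩
  | @right l r r' hr ih =>
      intro V W hQ
      cases V with
      | leaf =>
          have hQ' : node l r' = W := hQ
          exact ⟨leaf, node l r, rfl, Or.inr ⟨rfl, hQ' ▸ Rot.right l hr⟩⟩
      | node Vl Vr =>
          simp only [lgraft, node.injEq] at hQ
          obtain ⟨hl', hVr⟩ := hQ
          subst hVr
          exact ⟨node Vl r, W, by simp [lgraft, hl'], Or.inl ⟨Rot.right Vl hr, rfl⟩⟩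

/-- Backward preservation of leftmost-leaf decompositions along Tamari chains. -/
lemma lchain {P Q : BT} (h : tamariLE P Q) : ∀ V W : BT, Q = lgraft V W →
    ∃ V' W' : BT, P = lgraft V' W' ∧ tamariLE V' V ∧ tamariLE W' W := by
  induction h using Relation.ReflTransGen.head_induction_on with
  | refl => exact fun V W hQ => ⟨V, W, hQ, Relation.ReflTransGen.refl,
      Relation.ReflTransGen.refl⟩
  | head step _ ih =>
      intro V W hQ
      obtain ⟨V'', W'', hmid, hV, hW⟩ := ih V W hQ
      obtain ⟨V', W', hP, hd⟩ := lstep step V'' W'' hmid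
      rcases hd with ⟨h1, h2⟩ | ⟨h1, h2⟩
      · exact ⟨V', W', hP, Relation.ReflTransGen.head h1 hV, h2 ▸ hW⟩
      · exact ⟨V', W', hP, h1 ▸ hV, Relation.ReflTransGen.head h2 hW⟩

/-- One forward step for decompositions at the rightmost leaf. -/
lemma rstep : ∀ {P Q : BT}, Rot P Q → ∀ V W : BT, P = rgraft V W →
    ∃ V' W' : BT, Q = rgraft V' W' ∧
      ((Rot V V' ∧ W = W') ∨ (V = V' ∧ Rot W W')) := by
  intro P Q hrot
  induction hrot with
  | root a b c =>
      intro V W hP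
      cases V with
      | leaf =>
          have hP' : node (node a b) c = W := hP
          exact ⟨leaf, node a (node b c), rfl, Or.inr ⟨rfl, hP' ▸ Rot.root a b c⟩⟩
      | node Vl Vr =>
          simp only [rgraft, node.injEq] at hP
          obtain ⟨hVl, hc⟩ := hP
          subst hVl
          exact ⟨node a (node b Vr), W, by simp [rgraft, hc],
            Or.inl ⟨Rot.root a b Vr, rfl⟩⟩
  | @left l l' r hl ih =>
      intro V W hP
      cases V with
      | leaf =>
          have hP' : node l r = W := hP
          exact ⟨leaf, node l' r, rfl, Or.inr ⟨rfl, hP' ▸ Rot.left r hl⟩⟩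
      | node Vl Vr =>
          simp only [rgraft, node.injEq] at hP
          obtain ⟨hVl, hr⟩ := hP
          subst hVl
          exact ⟨node l' Vr, W, by simp [rgraft, hr], Or.inl ⟨Rot.left Vr hl, rfl⟩⟩
  | @right l r r' hr ih =>
      intro V W hP
      cases V with
      | leaf =>
          have hP' : node l r = W := hP
          exact ⟨leaf, node l r', rfl, Or.inr ⟨rfl, hP' ▸ Rot.right l hr⟩⟩
      | node Vl Vr =>
          simp only [rgraft, node.injEq] at hP
          obtain ⟨hVl, hrg⟩ := hP
          subst hVl
          obtain ⟨V'', W'', hrdec, hd⟩ := ih Vr W hrg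
          refine ⟨node l V'', W'', by simp [rgraft, hrdec], ?_⟩
          rcases hd with ⟨h1, h2⟩ | ⟨h1, h2⟩
          · exact Or.inl ⟨Rot.right l h1, h2⟩
          · exact Or.inr ⟨by rw [h1], h2⟩

/-- Forward preservation of rightmost-leaf decompositions along Tamari chains. -/
lemma rchain {P Q : BT} (h : tamariLE P Q) : ∀ V W : BT, P = rgraft V W →
    ∃ V' W' : BT, Q = rgraft V' W' ∧ tamariLE V V' ∧ tamariLE W W' := by
  induction h with
  | refl => exact fun V W hP => ⟨V, W, hP, Relation.ReflTransGen.refl,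
      Relation.ReflTransGen.refl⟩
  | tail _ step ih =>
      intro V W hP
      obtain ⟨V'', W'', hmid, hV, hW⟩ := ih V W hP
      obtain ⟨V', W', hQ, hd⟩ := rstep step V'' W'' hmid
      rcases hd with ⟨h1, h2⟩ | ⟨h1, h2⟩
      · exact ⟨V', W', hQ, Relation.ReflTransGen.tail hV h1, h2 ▸ hW⟩
      · exact ⟨V', W', hQ, h1 ▸ hV, Relation.ReflTransGen.tail hW h2⟩

end BT

/-- a new interval `[S,T]` of `Tam n`, `n ≥ 1`, has the shape `S = Y∘₁S1`,
`T = Y∘₂T1` for trees `S1, T1` of size `n−1`, where `Y` is the binary tree of size 1. -/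
theorem new_interval_shape (n : ℕ) (hn : 1 ≤ n) (S T : BT)
    (h : IsNewInterval n S T) :
    ∃ S1 T1 : BT, S1.size = n - 1 ∧ T1.size = n - 1 ∧
      S = (BT.node .leaf .leaf).graft 1 S1 ∧ T = (BT.node .leaf .leaf).graft 2 T1 := by
  obtain ⟨hSn, hTn, hle, hnew⟩ := h
  -- S and T are nonempty
  obtain ⟨Tl, Tr, rfl⟩ : ∃ Tl Tr, T = BT.node Tl Tr := by
    cases T with
    | leaf => simp [BT.size] at hTn; omega
    | node l r => exact ⟨l, r, rfl⟩
  obtain ⟨Sl, Sr, rfl⟩ : ∃ Sl Sr, S = BT.node Sl Sr := by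
    cases S with
    | leaf => simp [BT.size] at hSn; omega
    | node l r => exact ⟨l, r, rfl⟩
  -- The left subtree of T is a leaf
  have hTl : Tl = BT.leaf := by
    by_contra hne
    have hk : 1 ≤ Tl.size := by
      rcases Nat.eq_zero_or_pos Tl.size with h0 | h1
      · exact absurd (BT.eq_leaf_of_size_eq_zero h0) hne
      · exact h1
    obtain ⟨V', W', hS, hV, hW⟩ := BT.lchain hle (BT.node .leaf Tr) Tl
      (by simp [BT.lgraft])
    apply hnew
    refine ⟨V', BT.node .leaf Tr, W', Tl, 1, BT.tamariLE_size hV,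
      BT.tamariLE_size hW, ?_, ?_, hV, hW, le_refl 1, by omega, ?_, ?_⟩
    · rw [BT.tamariLE_size hV]
      simp only [BT.size] at hTn ⊢
      omega
    · rw [BT.tamariLE_size hW]
      simp only [BT.size] at hTn ⊢
      omega
    · rw [BT.lgraft_eq]; exact hS
    · rw [BT.lgraft_eq]; simp [BT.lgraft]
  -- The right subtree of S is a leaf
  have hSr : Sr = BT.leaf := by
    by_contra hne
    have hk : 1 ≤ Sr.size := by
      rcases Nat.eq_zero_or_pos Sr.size with h0 | h1
      · exact absurd (BT.eq_leaf_of_size_eq_zero h0) hne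
      · exact h1
    obtain ⟨V', W', hT, hV, hW⟩ := BT.rchain hle (BT.node Sl .leaf) Sr
      (by simp [BT.rgraft])
    apply hnew
    have hsz : (BT.node Sl BT.leaf).size = Sl.size + 1 := by simp [BT.size]
    have hVsz : V'.size = Sl.size + 1 := by rw [← BT.tamariLE_size hV, hsz]
    refine ⟨BT.node Sl .leaf, V', Sr, W', Sl.size + 2, by rw [hsz, hVsz],
      BT.tamariLE_size hW, ?_, ?_, hV, hW, by omega, by rw [hsz], ?_, ?_⟩
    · rw [hsz]
      simp only [BT.size] at hSn
      omega
    · simp only [BT.size] at hSn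
      omega
    · have : Sl.size + 2 = (BT.node Sl BT.leaf).size + 1 := by rw [hsz]
      rw [this, BT.rgraft_eq]
      simp [BT.rgraft]
    · have : Sl.size + 2 = V'.size + 1 := by rw [hVsz]
      rw [this, BT.rgraft_eq]
      exact hT
  subst hTl hSr
  refine ⟨Sl, Tr, ?_, ?_, ?_, ?_⟩
  · simp only [BT.size] at hSn; omega
  · simp only [BT.size] at hTn; omega
  · simp [BT.graft]
  · simp [BT.graft, BT.size]
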